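/- Let p be a prime, d a positive natural number, γ ≥ 0 a real number, and a ∈ ℚ_p nonzero. If τ_1, …, τ_n is a collection of p-adic (γ, a)-equiangular lines in ℚ_p^d and |a²·n| ≤ γ², then |n|² ≤ |d| · γ²/|a²|, where |n| and |d| denote the p-adic absolute values of the integers n and d and |a²·n| denotes the p-adic absolute value of a² times n. -/

import Mathlib

open scoped BigOperators

noncomputable section

variable {p : ℕ} [Fact p.Prime]

/-- The bilinear form `⟨x, y⟩ = ∑ i, x i * y i` on `ℚ_p^d`. -/
def pinner {d : ℕ} (x y : Fin d → ℚ_[p]) : ℚ_[p] := ∑ i, x i * y i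

/-- `⟨·, y⟩` as a linear map. -/
def pinnerL {d : ℕ} (y : Fin d → ℚ_[p]) : (Fin d → ℚ_[p]) →ₗ[ℚ_[p]] ℚ_[p] where
  toFun x := pinner x y
  map_add' x z := by simp [pinner, add_mul, Finset.sum_add_distrib]
  map_smul' c x := by simp [pinner, Finset.mul_sum, mul_assoc]

/-- The frame operator `S_τ x = ∑ j, ⟨x, τ j⟩ • τ j`. -/
def frameOp {d n : ℕ} (τ : Fin n → Fin d → ℚ_[p]) :
    (Fin d → ℚ_[p]) →ₗ[ℚ_[p]] (Fin d → ℚ_[p]) :=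
  ∑ j, (pinnerL (τ j)).smulRight (τ j)

/-- `S_τ` is similar (through an invertible operator) to a diagonal operator with
eigenvalues `λ_1, …, λ_d` satisfying `|∑ λ_j|² ≤ |d| |∑ λ_j²|`. -/
def GoodDiagonalizable {d n : ℕ} (τ : Fin n → Fin d → ℚ_[p]) : Prop :=
  ∃ (P : (Fin d → ℚ_[p]) ≃ₗ[ℚ_[p]] (Fin d → ℚ_[p])) (lam : Fin d → ℚ_[p]),
    frameOp τ = P.toLinearMap ∘ₗ Matrix.toLin' (Matrix.diagonal lam) ∘ₗ P.symm.toLinearMap ∧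
    ‖∑ j, lam j‖ ^ 2 ≤ ‖(d : ℚ_[p])‖ * ‖∑ j, lam j ^ 2‖

/-- p-adic `γ`-equiangular lines. -/
def IsPadicEquiangular {d n : ℕ} (γ : ℝ) (τ : Fin n → Fin d → ℚ_[p]) : Prop :=
  (∀ j, pinner (τ j) (τ j) = 1) ∧
  (∀ j k, j ≠ k → ‖pinner (τ j) (τ k)‖ = γ) ∧
  GoodDiagonalizable τ

/-- p-adic `(γ, a)`-equiangular lines. -/
def IsPadicEquiangularA {d n : ℕ} (γ : ℝ) (a : ℚ_[p]) (τ : Fin n → Fin d → ℚ_[p]) : Prop :=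
  (∀ j, pinner (τ j) (τ j) = a) ∧
  (∀ j k, j ≠ k → ‖pinner (τ j) (τ k)‖ = γ) ∧
  GoodDiagonalizable τ


lemma trace_rankOne {d : ℕ} (y v : Fin d → ℚ_[p]) :
    LinearMap.trace ℚ_[p] _ ((pinnerL y).smulRight v) = pinner v y := by
  rw [LinearMap.trace_eq_matrix_trace ℚ_[p] (Pi.basisFun ℚ_[p] (Fin d))]
  rw [Matrix.trace]
  simp [LinearMap.toMatrix, Matrix.diag, pinnerL, pinner, Pi.single_apply,
    Finset.mul_sum, mul_comm]

lemma rankOne_comp {d : ℕ} (y v w u : Fin d → ℚ_[p]) :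
    ((pinnerL y).smulRight v) ∘ₗ ((pinnerL w).smulRight u)
      = pinner u y • ((pinnerL w).smulRight v) := by
  apply LinearMap.ext; intro x
  funext i
  simp only [pinnerL, pinner, LinearMap.comp_apply, LinearMap.smulRight_apply,
    LinearMap.smul_apply, LinearMap.coe_mk, AddHom.coe_mk, Pi.smul_apply, smul_eq_mul,
    Finset.sum_mul, Finset.mul_sum]
  rw [Finset.sum_comm]
  exact Finset.sum_congr rfl fun k _ => Finset.sum_congr rfl fun l _ => by ring

lemma trace_toLin'_diag {d : ℕ} (lam : Fin d → ℚ_[p]) :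
    LinearMap.trace ℚ_[p] _ (Matrix.toLin' (Matrix.diagonal lam)) = ∑ j, lam j := by
  rw [LinearMap.trace_eq_matrix_trace ℚ_[p] (Pi.basisFun ℚ_[p] (Fin d)),
    LinearMap.toMatrix_eq_toMatrix', LinearMap.toMatrix'_toLin', Matrix.trace_diagonal]

theorem padic_vanLintSeidel_case_small_a {d n : ℕ} (hd : 0 < d)
    (γ : ℝ) (hγ : 0 ≤ γ) (a : ℚ_[p]) (ha : a ≠ 0) (τ : Fin n → Fin d → ℚ_[p])
    (h : IsPadicEquiangularA γ a τ) (hn : ‖a ^ 2 * (n : ℚ_[p])‖ ≤ γ ^ 2) :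
    ‖(n : ℚ_[p])‖ ^ 2 ≤ ‖(d : ℚ_[p])‖ * (γ ^ 2 / ‖a ^ 2‖) := by
  obtain ⟨hself, hang, P, lam, hS, hlam⟩ := h
  -- the frame operator is conjugate to the diagonal operator
  have hconj : frameOp τ = P.conj (Matrix.toLin' (Matrix.diagonal lam)) := by
    rw [hS, LinearEquiv.conj_apply, LinearMap.comp_assoc]
  -- trace of frame operator
  have htr1 : LinearMap.trace ℚ_[p] _ (frameOp τ) = (n : ℚ_[p]) * a := by
    rw [frameOp, map_sum]
    simp only [trace_rankOne, hself]
    simp [mul_comm]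
  have htr1' : LinearMap.trace ℚ_[p] _ (frameOp τ) = ∑ j, lam j := by
    rw [hconj, LinearMap.trace_conj', trace_toLin'_diag]
  have hsum : ∑ j, lam j = (n : ℚ_[p]) * a := by rw [← htr1', htr1]
  -- square of frame operator
  have hsq : frameOp τ ∘ₗ frameOp τ
      = P.conj (Matrix.toLin' (Matrix.diagonal (fun j => lam j ^ 2))) := by
    rw [hconj]
    apply LinearMap.ext; intro x
    simp only [LinearEquiv.conj_apply, LinearMap.comp_apply, LinearEquiv.coe_coe,
      LinearEquiv.symm_apply_apply]
    congr 1
    rw [← Matrix.toLin'_mul_apply, Matrix.diagonal_mul_diagonal]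
    congr 1
    ext j
    ring
  have htr2 : LinearMap.trace ℚ_[p] _ (frameOp τ ∘ₗ frameOp τ) = ∑ j, lam j ^ 2 := by
    rw [hsq, LinearMap.trace_conj', trace_toLin'_diag]
  have htr2' : LinearMap.trace ℚ_[p] _ (frameOp τ ∘ₗ frameOp τ)
      = ∑ j, ∑ k, pinner (τ k) (τ j) * pinner (τ j) (τ k) := by
    rw [← Module.End.mul_eq_comp, frameOp, Finset.sum_mul_sum, map_sum]
    refine Finset.sum_congr rfl fun j _ => ?_
    rw [map_sum]
    refine Finset.sum_congr rfl fun k _ => ?_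
    rw [Module.End.mul_eq_comp, rankOne_comp, map_smul, trace_rankOne, smul_eq_mul, mul_comm]
  have hsum2 : ∑ j, lam j ^ 2 = ∑ j, ∑ k, pinner (τ k) (τ j) * pinner (τ j) (τ k) := by
    rw [← htr2, htr2']
  -- bound on the norm of ∑ lam j ^ 2
  have hγ2 : (0:ℝ) ≤ γ ^ 2 := pow_nonneg hγ 2
  have hoff : ‖∑ j, ∑ k ∈ Finset.univ.erase j,
      pinner (τ k) (τ j) * pinner (τ j) (τ k)‖ ≤ γ ^ 2 := by
    refine IsUltrametricDist.norm_sum_le_of_forall_le_of_nonneg hγ2 fun j _ => ?_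
    refine IsUltrametricDist.norm_sum_le_of_forall_le_of_nonneg hγ2 fun k hk => ?_
    have hkj : k ≠ j := Finset.ne_of_mem_erase hk
    rw [norm_mul, hang k j hkj, hang j k (Ne.symm hkj), sq]
  have hdiag : (∑ j : Fin n, pinner (τ j) (τ j) * pinner (τ j) (τ j))
      = a ^ 2 * (n : ℚ_[p]) := by
    simp only [hself, ← sq]
    simp [mul_comm]
  have hsplit : ∑ j, ∑ k, pinner (τ k) (τ j) * pinner (τ j) (τ k)
      = a ^ 2 * (n : ℚ_[p]) + ∑ j, ∑ k ∈ Finset.univ.erase j,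
          pinner (τ k) (τ j) * pinner (τ j) (τ k) := by
    rw [← hdiag, ← Finset.sum_add_distrib]
    refine Finset.sum_congr rfl fun j _ => ?_
    exact (Finset.add_sum_erase _ _ (Finset.mem_univ j)).symm
  have hnorm2 : ‖∑ j, lam j ^ 2‖ ≤ γ ^ 2 := by
    rw [hsum2, hsplit]
    exact le_trans (IsUltrametricDist.norm_add_le_max _ _) (max_le hn hoff)
  -- put everything together
  have hkey : ‖(n : ℚ_[p]) * a‖ ^ 2 ≤ ‖(d : ℚ_[p])‖ * γ ^ 2 := by
    rw [← hsum]
    calc ‖∑ j, lam j‖ ^ 2 ≤ ‖(d : ℚ_[p])‖ * ‖∑ j, lam j ^ 2‖ := hlam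
      _ ≤ ‖(d : ℚ_[p])‖ * γ ^ 2 := by
          exact mul_le_mul_of_nonneg_left hnorm2 (norm_nonneg _)
  have ha2 : (0:ℝ) < ‖a ^ 2‖ := norm_pos_iff.mpr (pow_ne_zero 2 ha)
  rw [mul_div_assoc' , le_div_iff₀ ha2]
  calc ‖(n : ℚ_[p])‖ ^ 2 * ‖a ^ 2‖ = ‖(n : ℚ_[p]) * a‖ ^ 2 := by
        rw [norm_mul, norm_pow, mul_pow]
    _ ≤ ‖(d : ℚ_[p])‖ * γ ^ 2 := hkey


end
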